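/- The commutative ℂ-algebra ℂ[t, t⁻¹, u]/(u² - t² - 4t) is isomorphic as a ℂ-algebra to the localization of the polynomial ring ℂ[s] away from s and s-1, i.e., to ℂ[s, s⁻¹, (s-1)⁻¹]. -/

import Mathlib

/-- The relation ideal (u² - t² - 4t), where u is `Polynomial.X` over the
Laurent polynomial ring ℂ[t, t⁻¹]. -/
noncomputable def relIdeal : Ideal (Polynomial (LaurentPolynomial ℂ)) :=
  Ideal.span {Polynomial.X ^ 2 -
    Polynomial.C (LaurentPolynomial.T 2 + 4 * LaurentPolynomial.T 1)}

/-- The three-point ring ℂ[t, t⁻¹, u]/(u² - t² - 4t). -/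
noncomputable abbrev ThreePointRing : Type :=
  Polynomial (LaurentPolynomial ℂ) ⧸ relIdeal

/-- ℂ[s, s⁻¹, (s-1)⁻¹]: the localization of ℂ[s] at the multiplicative set
generated by s and s - 1. -/
noncomputable abbrev RationalRing : Type :=
  Localization (Submonoid.closure {Polynomial.X, Polynomial.X - 1} :
    Submonoid (Polynomial ℂ))

namespace ThreePointAux

open Polynomial LaurentPolynomial

local instance towerL : IsScalarTower ℂ (Polynomial ℂ) (LaurentPolynomial ℂ) :=
  IsScalarTower.of_algebraMap_eq fun c => by
    rw [LaurentPolynomial.algebraMap_eq_toLaurent, Polynomial.algebraMap_eq,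
      Polynomial.toLaurent_C]
    rfl

local instance lLoc :
    IsLocalization (Submonoid.powers (Polynomial.X : Polynomial ℂ)) (LaurentPolynomial ℂ) :=
  LaurentPolynomial.isLocalization

noncomputable abbrev MC : Submonoid (Polynomial ℂ) := Submonoid.closure {Polynomial.X, Polynomial.X - 1}

noncomputable def aM : Polynomial ℂ →+* RationalRing := algebraMap _ _

lemma hsu : IsUnit (aM Polynomial.X) :=
  IsLocalization.map_units (M := MC) RationalRing
    ⟨X, Submonoid.subset_closure (Set.mem_insert _ _)⟩

lemma hsu1 : IsUnit (aM Polynomial.X - 1) := by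
  have := IsLocalization.map_units (M := MC) RationalRing
    ⟨X - 1, Submonoid.subset_closure (Set.mem_insert_of_mem _ rfl)⟩
  simpa [aM, map_sub] using this

noncomputable def sU : RationalRingˣ := hsu.unit

noncomputable def vL : RationalRing := ↑sU⁻¹

lemma hAv : aM Polynomial.X * vL = 1 := by
  have : (↑sU : RationalRing) = aM Polynomial.X := hsu.unit_spec
  rw [vL, ← this]
  exact sU.mul_inv

noncomputable def tL : RationalRing := (aM Polynomial.X - 1) ^ 2 * vL

noncomputable def uL : RationalRing := (aM Polynomial.X - 1) * (aM Polynomial.X + 1) * vL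

lemma htL_unit : IsUnit tL := (hsu1.pow 2).mul sU⁻¹.isUnit

noncomputable def phi0 : LaurentPolynomial ℂ →ₐ[ℂ] RationalRing :=
  IsLocalization.liftAlgHom (f := Polynomial.aeval tL)
    (by
      intro y
      obtain ⟨n, hn⟩ := (Submonoid.mem_powers_iff _ _).mp y.2
      rw [← hn, map_pow, Polynomial.aeval_X]
      exact htL_unit.pow n)

lemma phi0_aM (p : Polynomial ℂ) : phi0 (algebraMap (Polynomial ℂ) _ p) = Polynomial.aeval tL p := by
  rw [phi0, IsLocalization.liftAlgHom_apply, IsLocalization.lift_eq]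
  rfl

lemma phi0_T1 : phi0 (T 1) = tL := by
  have h : (T 1 : LaurentPolynomial ℂ) = algebraMap (Polynomial ℂ) _ Polynomial.X := by
    rw [LaurentPolynomial.algebraMap_eq_toLaurent, Polynomial.toLaurent_X]
  rw [h, phi0_aM, Polynomial.aeval_X]

noncomputable def phi : Polynomial (LaurentPolynomial ℂ) →ₐ[ℂ] RationalRing :=
  Polynomial.aevalTower phi0 uL

lemma phi_rel :
    phi (Polynomial.X ^ 2 - Polynomial.C (LaurentPolynomial.T 2 + 4 * LaurentPolynomial.T 1))
      = 0 := by
  have h2 : (2 : ℤ) = 1 + 1 := rfl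
  rw [map_sub, map_pow, phi, Polynomial.aevalTower_X, Polynomial.aevalTower_C, map_add, map_mul,
    h2, LaurentPolynomial.T_add, map_mul, phi0_T1, map_ofNat]
  have hv := hAv
  rw [tL, uL]
  set A := aM Polynomial.X
  set v := vL
  linear_combination (4 * (A - 1) ^ 2 * v) * hv

noncomputable def Phi : ThreePointRing →ₐ[ℂ] RationalRing :=
  Ideal.Quotient.liftₐ relIdeal phi (by
    intro a ha
    rw [relIdeal, Ideal.mem_span_singleton] at ha
    obtain ⟨c, rfl⟩ := ha
    rw [map_mul, phi_rel, zero_mul])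

noncomputable def pq : Polynomial (LaurentPolynomial ℂ) →ₐ[ℂ] ThreePointRing :=
  Ideal.Quotient.mkₐ ℂ relIdeal

lemma Phi_pq (p : Polynomial (LaurentPolynomial ℂ)) : Phi (pq p) = phi p := by
  rw [Phi, pq, Ideal.Quotient.liftₐ_apply, Ideal.Quotient.mkₐ_eq_mk]
  rfl

noncomputable def tq : ThreePointRing := pq (Polynomial.C (LaurentPolynomial.T 1))
noncomputable def uq : ThreePointRing := pq Polynomial.X
noncomputable def Eh : ThreePointRing := (algebraMap ℂ ThreePointRing : ℂ →+* ThreePointRing) (2⁻¹ : ℂ)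

lemma h2q : Eh * 2 = 1 := by
  rw [Eh, show (2 : ThreePointRing) = algebraMap ℂ _ 2 from (map_ofNat (algebraMap ℂ ThreePointRing) 2).symm, ← map_mul]
  norm_num

lemma hq : uq ^ 2 = tq ^ 2 + 4 * tq := by
  have h0 : pq (Polynomial.X ^ 2
      - Polynomial.C (LaurentPolynomial.T 2 + 4 * LaurentPolynomial.T 1)) = 0 := by
    rw [pq, Ideal.Quotient.mkₐ_eq_mk, Ideal.Quotient.eq_zero_iff_mem, relIdeal]
    exact Ideal.subset_span rfl
  have hC : Polynomial.C (LaurentPolynomial.T 2 + 4 * LaurentPolynomial.T 1 : LaurentPolynomial ℂ)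
      = Polynomial.C (LaurentPolynomial.T 1) ^ 2 + 4 * Polynomial.C (LaurentPolynomial.T 1) := by
    rw [show (2 : ℤ) = 1 + 1 from rfl, LaurentPolynomial.T_add, map_add, map_mul, map_mul,
      show (Polynomial.C (4 : LaurentPolynomial ℂ)) = (4 : Polynomial (LaurentPolynomial ℂ)) from
        map_ofNat _ 4, sq]
  rw [map_sub, map_pow, hC, map_add, map_mul, map_pow,
    show pq (4 : Polynomial (LaurentPolynomial ℂ)) = 4 from map_ofNat pq 4] at h0
  rw [uq, tq]
  linear_combination h0

noncomputable def aT : ThreePointRing := Eh * (tq + 2 + uq)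
noncomputable def bT : ThreePointRing := Eh * (tq + 2 - uq)

lemma hab : aT * bT = 1 := by
  rw [aT, bT]
  linear_combination (-(Eh ^ 2)) * hq + (Eh * 2 + 1) * h2q

lemma hsum : aT + bT = tq + 2 := by
  rw [aT, bT]; linear_combination (tq + 2) * h2q

lemma hdiff : aT - bT = uq := by
  rw [aT, bT]; linear_combination uq * h2q

local instance dfTP : IsDedekindFiniteMonoid ThreePointRing :=
  ⟨fun {a b} h => (mul_comm b a).trans h⟩

lemma htq : IsUnit tq := by
  apply IsUnit.of_mul_eq_one (pq (Polynomial.C (LaurentPolynomial.T (-1))))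
  rw [tq, ← map_mul, ← map_mul, ← LaurentPolynomial.T_add]
  norm_num

lemma hab1 : (aT - 1) * (bT - 1) = -tq := by
  rw [aT, bT]
  linear_combination (-(Eh ^ 2)) * hq + (Eh * 2 - tq - 1) * h2q

lemma haT : IsUnit aT := IsUnit.of_mul_eq_one bT hab

lemma haT1 : IsUnit (aT - 1) := by
  have hw : tq * pq (Polynomial.C (LaurentPolynomial.T (-1))) = 1 := by
    rw [tq, ← map_mul, ← map_mul, ← LaurentPolynomial.T_add]
    norm_num
  apply IsUnit.of_mul_eq_one ((bT - 1) * -(pq (Polynomial.C (LaurentPolynomial.T (-1)))))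
  linear_combination (-(pq (Polynomial.C (LaurentPolynomial.T (-1))))) * hab1 + hw

noncomputable def psi0 : Polynomial ℂ →ₐ[ℂ] ThreePointRing := Polynomial.aeval aT

lemma psi0_units : ∀ y : MC, IsUnit (psi0 y) := by
  rintro ⟨y, hy⟩
  induction hy using Submonoid.closure_induction with
  | mem x hx =>
    rcases hx with rfl | rfl
    · simpa [psi0] using haT
    · simpa [psi0, map_sub] using haT1
  | one => simp
  | mul x y hx hy ihx ihy => rw [map_mul]; exact ihx.mul ihy

noncomputable def Psi : RationalRing →ₐ[ℂ] ThreePointRing :=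
  IsLocalization.liftAlgHom (M := MC) (S := RationalRing) (P := ThreePointRing) (f := psi0) psi0_units

lemma Psi_aM (p : Polynomial ℂ) : Psi (aM p) = Polynomial.aeval aT p := by
  rw [Psi, aM, IsLocalization.liftAlgHom_apply, IsLocalization.lift_eq]
  rfl

lemma Psi_v : Psi vL = bT := by
  have hs : (↑sU : RationalRing) = aM Polynomial.X := hsu.unit_spec
  have h1 : Psi vL * aT = 1 := by
    have : Psi vL * Psi (aM Polynomial.X) = 1 := by
      rw [← map_mul, vL, ← hs, sU.inv_mul, map_one]
    rwa [Psi_aM, Polynomial.aeval_X] at this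
  calc Psi vL = Psi vL * (aT * bT) := by rw [hab]; ring
    _ = (Psi vL * aT) * bT := by ring
    _ = bT := by rw [h1]; ring

lemma Psi_tL : Psi tL = tq := by
  rw [tL, map_mul, map_pow, map_sub, map_one, Psi_aM, Polynomial.aeval_X, Psi_v]
  linear_combination (aT - 2) * hab + hsum

lemma Psi_uL : Psi uL = uq := by
  rw [uL, map_mul, map_mul, map_sub, map_add, map_one, Psi_aM, Polynomial.aeval_X, Psi_v]
  linear_combination aT * hab + hdiff

lemma h2L : (algebraMap ℂ RationalRing (2⁻¹ : ℂ)) * 2 = 1 := by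
  rw [show (2 : RationalRing) = algebraMap ℂ _ 2 from (map_ofNat _ 2).symm, ← map_mul]
  norm_num

lemma Phi_aT : Phi aT = aM Polynomial.X := by
  have h1 : Phi tq = tL := by rw [tq, Phi_pq, phi, Polynomial.aevalTower_C, phi0_T1]
  have h2 : Phi uq = uL := by rw [uq, Phi_pq, phi, Polynomial.aevalTower_X]
  have h3 : Phi Eh = algebraMap ℂ RationalRing (2⁻¹ : ℂ) := by
    rw [Eh]; exact Phi.commutes _
  have h4 : Phi (2 : ThreePointRing) = 2 := map_ofNat Phi 2
  rw [aT, map_mul, map_add, map_add, h1, h2, h3, h4]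
  have hv := hAv
  have h2' := h2L
  rw [tL, uL]
  set A := aM Polynomial.X
  set v := vL
  set E := algebraMap ℂ RationalRing (2⁻¹ : ℂ)
  linear_combination (2 * E * A - 2 * E) * hv + A * h2'

lemma comp1 : Phi.comp Psi = AlgHom.id ℂ RationalRing := by
  apply AlgHom.coe_ringHom_injective
  apply IsLocalization.ringHom_ext MC
  apply Polynomial.ringHom_ext'
  · ext c
    simp only [RingHom.coe_comp, Function.comp_apply, ← Polynomial.algebraMap_eq,
      ← IsScalarTower.algebraMap_apply, AlgHom.toRingHom_eq_coe, RingHom.coe_coe,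
      AlgHom.comp_apply, AlgHom.commutes, AlgHom.id_apply]
  · show (Phi.comp Psi) (aM Polynomial.X) = aM Polynomial.X
    rw [AlgHom.comp_apply, Psi_aM, Polynomial.aeval_X, Phi_aT]

lemma comp2 : Psi.comp Phi = AlgHom.id ℂ ThreePointRing := by
  apply Ideal.Quotient.algHom_ext
  apply Polynomial.algHom_ext'
  · apply AlgHom.coe_ringHom_injective
    apply IsLocalization.ringHom_ext (Submonoid.powers (Polynomial.X : Polynomial ℂ))
    apply Polynomial.ringHom_ext'
    · ext c
      simp only [RingHom.coe_comp, Function.comp_apply, ← Polynomial.algebraMap_eq,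
        ← IsScalarTower.algebraMap_apply, AlgHom.toRingHom_eq_coe, RingHom.coe_coe,
        AlgHom.comp_apply, AlgHom.commutes]
    · show (((Psi.comp Phi).comp (Ideal.Quotient.mkₐ ℂ relIdeal)).comp Polynomial.CAlgHom)
          (algebraMap (Polynomial ℂ) (LaurentPolynomial ℂ) Polynomial.X)
        = ((AlgHom.id ℂ ThreePointRing).comp
            ((Ideal.Quotient.mkₐ ℂ relIdeal).comp Polynomial.CAlgHom))
          (algebraMap (Polynomial ℂ) (LaurentPolynomial ℂ) Polynomial.X)
      have hT : algebraMap (Polynomial ℂ) (LaurentPolynomial ℂ) Polynomial.X = T 1 := by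
        rw [LaurentPolynomial.algebraMap_eq_toLaurent, Polynomial.toLaurent_X]
      rw [hT]
      simp only [AlgHom.comp_apply, Polynomial.CAlgHom_apply, AlgHom.id_apply]
      show Psi (Phi (pq (Polynomial.C (T 1)))) = pq (Polynomial.C (T 1))
      rw [Phi_pq, phi, Polynomial.aevalTower_C, phi0_T1, Psi_tL, tq]
  · show (Psi.comp Phi) (pq Polynomial.X) = pq Polynomial.X
    rw [AlgHom.comp_apply, Phi_pq, phi, Polynomial.aevalTower_X, Psi_uL, uq]

end ThreePointAux

/-- ℂ[t, t⁻¹, u]/(u² - t² - 4t) ≅ ℂ[s, s⁻¹, (s-1)⁻¹] as ℂ-algebras. -/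
theorem threePointRing_iso : Nonempty (ThreePointRing ≃ₐ[ℂ] RationalRing) := by
  exact ⟨AlgEquiv.ofAlgHom ThreePointAux.Phi ThreePointAux.Psi ThreePointAux.comp1
    ThreePointAux.comp2⟩
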